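/- Let A be a unital C*-algebra with a unitary u and isometries w_m satisfying relations (B0)-(B3). Fix positive integers m, n, set d = gcd(m,n), m' = m/d, n' = n/d, and choose integers α', β' with 1 = α'm' - β'n'. Then for all integers k, l: if d does not divide l - k then w_m w_m* u^{l-k} w_n w_n* = 0, and if d divides l - k then w_m w_m* u^{l-k} w_n w_n* = u^{mα'(l-k)/d} w_{lcm(m,n)} w_{lcm(m,n)}* (u*)^{nβ'(l-k)/d}. -/

import Mathlib

set_option linter.unusedSectionVars false
section Helpers
variable {A : Type*} [NormedRing A] [StarRing A] [CStarRing A]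
    [NormedAlgebra ℂ A] [CompleteSpace A] [StarModule ℂ A]

lemma myU_add (u : unitary A) (a b : ℤ) : (↑(u ^ (a+b)) : A) = ↑(u^a) * ↑(u^b) := by
  rw [zpow_add]; rfl

lemma myU_star (u : unitary A) (a : ℤ) : star (↑(u ^ a) : A) = ↑(u^(-a)) := by
  rw [zpow_neg, ← Unitary.coe_star]; norm_cast

lemma myU_nat (u : unitary A) (m : ℕ) : (↑(u ^ (m:ℤ)) : A) = (↑u)^m := by
  rw [zpow_natCast]; norm_cast

lemma myU_zero (u : unitary A) : (↑(u ^ (0:ℤ)) : A) = 1 := by norm_num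

lemma myU_inv (u : unitary A) (a : ℤ) : (↑(u ^ a) : A) * ↑(u^(-a)) = 1 := by
  rw [← myU_add]; simp [myU_zero]

lemma myU_inv' (u : unitary A) (a : ℤ) : (↑(u ^ (-a)) : A) * ↑(u^a) = 1 := by
  rw [← myU_add]; simp [myU_zero]

/-- extension of B1 to integer powers -/
lemma myWU (u : unitary A) (w : ℕ → A)
    (hB1 : ∀ m : ℕ, 0 < m → w m * (u : A) = (u : A) ^ m * w m)
    (m : ℕ) (hm : 0 < m) (t : ℤ) :
    w m * ↑(u ^ t) = (↑(u ^ ((m:ℤ) * t)) : A) * w m := by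
  have hnat : ∀ s : ℕ, w m * ↑(u ^ (s:ℤ)) = (↑(u ^ ((m:ℤ) * s)) : A) * w m := by
    intro s
    induction s with
    | zero => simp [myU_zero]
    | succ i ih =>
        have e1 : ((i:ℤ) + 1) = (i+1 : ℕ) := by push_cast; ring
        have e2 : (m:ℤ) * ((i:ℤ)+1) = (m:ℤ) * i + m := by ring
        rw [← e1, myU_add, ← mul_assoc, ih, e2, myU_add, mul_assoc, mul_assoc]
        congr 1
        rw [show (↑(u ^ (1:ℤ)) : A) = (u:A) by norm_num, myU_nat]
        exact hB1 m hm
  rcases Int.eq_nat_or_neg t with ⟨s, rfl | rfl⟩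
  · exact hnat s
  · have hpos := hnat s
    calc w m * ↑(u ^ (-(s:ℤ)))
        = (↑(u ^ (-((m:ℤ)*s))) : A) * ↑(u ^ ((m:ℤ)*s)) * (w m * ↑(u ^ (-(s:ℤ)))) := by
          rw [myU_inv', one_mul]
      _ = (↑(u ^ (-((m:ℤ)*s))) : A) * ((↑(u ^ ((m:ℤ)*s)) : A) * w m * ↑(u ^ (-(s:ℤ)))) := by
          simp only [mul_assoc]
      _ = (↑(u ^ (-((m:ℤ)*s))) : A) * (w m * ↑(u ^ (s:ℤ)) * ↑(u ^ (-(s:ℤ)))) := by rw [hpos]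
      _ = (↑(u ^ (-((m:ℤ)*s))) : A) * w m := by rw [mul_assoc, myU_inv, mul_one]
      _ = (↑(u ^ ((m:ℤ) * (-(s:ℤ)))) : A) * w m := by rw [mul_neg]
end Helpers

section Helpers2
variable {A : Type*} [NormedRing A] [StarRing A] [CStarRing A]
    [NormedAlgebra ℂ A] [CompleteSpace A] [StarModule ℂ A]

/-- star version: w_m* u^{mt} = u^t w_m* -/
lemma myUW (u : unitary A) (w : ℕ → A)
    (hB1 : ∀ m : ℕ, 0 < m → w m * (u : A) = (u : A) ^ m * w m)
    (m : ℕ) (hm : 0 < m) (t : ℤ) :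
    star (w m) * ↑(u ^ ((m:ℤ) * t)) = (↑(u ^ t) : A) * star (w m) := by
  have h := congrArg star (myWU u w hB1 m hm (-t))
  rw [star_mul, star_mul, myU_star, myU_star, neg_neg, show (-((m:ℤ) * -t)) = (m:ℤ)*t by ring] at h
  exact h.symm

lemma myW1 (w : ℕ → A)
    (hiso : ∀ m : ℕ, 0 < m → star (w m) * w m = 1)
    (hB0 : ∀ m n : ℕ, 0 < m → 0 < n → w (m * n) = w m * w n) : w 1 = 1 := by
  have h2 : w 1 = star (w 1) * w 1 * w 1 := by rw [hiso 1 one_pos, one_mul]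
  rw [mul_assoc, ← hB0 1 1 one_pos one_pos] at h2
  rw [show (1*1 : ℕ) = 1 from rfl, hiso 1 one_pos] at h2
  exact h2

/-- L2 prime case -/
lemma myL2p (w : ℕ → A)
    (hiso : ∀ m : ℕ, 0 < m → star (w m) * w m = 1)
    (hB0 : ∀ m n : ℕ, 0 < m → 0 < n → w (m * n) = w m * w n)
    (hB2 : ∀ p q : ℕ, Nat.Prime p → Nat.Prime q → p ≠ q →
      star (w p) * w q = w q * star (w p))
    (p : ℕ) (hp : p.Prime) :
    ∀ n : ℕ, 0 < n → ¬ p ∣ n → star (w p) * w n = w n * star (w p) := by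
  intro n
  induction n using Nat.strong_induction_on with
  | _ n ih =>
    intro hn hpn
    rcases eq_or_lt_of_le (show 1 ≤ n from hn) with h1 | h1
    · rw [← h1, myW1 w hiso hB0]; simp
    · set q := n.minFac with hq
      have hqp : q.Prime := Nat.minFac_prime (by omega)
      have hqd : q ∣ n := Nat.minFac_dvd n
      set n2 := n / q with hn2
      have hqn2 : n = q * n2 := (Nat.mul_div_cancel' hqd).symm
      have hn2pos : 0 < n2 := Nat.div_pos (Nat.minFac_le (by omega)) hqp.pos
      have hn2lt : n2 < n := by
        have := hqp.two_le
        calc n2 = n / q := rfl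
          _ < n := Nat.div_lt_self (by omega) (by omega)
      have hpq : p ≠ q := fun h => hpn (h ▸ hqd)
      have hpn2 : ¬ p ∣ n2 := fun h => hpn (by rw [hqn2]; exact h.mul_left q)
      rw [hqn2, hB0 q n2 hqp.pos hn2pos, ← mul_assoc, hB2 p q hp hqp hpq,
        mul_assoc, ih n2 hn2lt hn2pos hpn2, ← mul_assoc]

/-- L2: coprime commutation -/
lemma myL2 (w : ℕ → A)
    (hiso : ∀ m : ℕ, 0 < m → star (w m) * w m = 1)
    (hB0 : ∀ m n : ℕ, 0 < m → 0 < n → w (m * n) = w m * w n)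
    (hB2 : ∀ p q : ℕ, Nat.Prime p → Nat.Prime q → p ≠ q →
      star (w p) * w q = w q * star (w p)) :
    ∀ m n : ℕ, 0 < m → 0 < n → Nat.Coprime m n →
      star (w m) * w n = w n * star (w m) := by
  intro m
  induction m using Nat.strong_induction_on with
  | _ m ih =>
    intro n hm hn hco
    rcases eq_or_lt_of_le (show 1 ≤ m from hm) with h1 | h1
    · rw [← h1, myW1 w hiso hB0]; simp
    · set p := m.minFac with hp
      have hpp : p.Prime := Nat.minFac_prime (by omega)
      have hpd : p ∣ m := Nat.minFac_dvd m
      set m2 := m / p with hm2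
      have hpm2 : m = p * m2 := (Nat.mul_div_cancel' hpd).symm
      have hm2pos : 0 < m2 := Nat.div_pos (Nat.minFac_le (by omega)) hpp.pos
      have hm2lt : m2 < m := by
        have := hpp.two_le
        exact Nat.div_lt_self (by omega) (by omega)
      have hpn : ¬ p ∣ n := by
        intro h
        have h2 := Nat.dvd_gcd hpd h
        rw [Nat.Coprime] at hco
        rw [hco] at h2
        exact hpp.one_lt.ne' (Nat.dvd_one.mp h2)
      have hco2 : Nat.Coprime m2 n :=
        Nat.Coprime.coprime_dvd_left ⟨p, by rw [hpm2, Nat.mul_comm]⟩ hco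
      rw [hpm2, hB0 p m2 hpp.pos hm2pos, star_mul, mul_assoc,
        myL2p w hiso hB0 hB2 p hpp n hn hpn, ← mul_assoc,
        ih m2 hm2lt n hm2pos hn hco2, mul_assoc]
end Helpers2

section Helpers3
variable {A : Type*} [NormedRing A] [StarRing A] [CStarRing A]
    [NormedAlgebra ℂ A] [CompleteSpace A] [StarModule ℂ A]

/-- L1: w_m* u^t w_m = 0 when m ∤ t -/
lemma myL1 (u : unitary A) (w : ℕ → A)
    (hiso : ∀ m : ℕ, 0 < m → star (w m) * w m = 1)
    (hB0 : ∀ m n : ℕ, 0 < m → 0 < n → w (m * n) = w m * w n)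
    (hB1 : ∀ m : ℕ, 0 < m → w m * (u : A) = (u : A) ^ m * w m)
    (hB3 : ∀ p k : ℕ, Nat.Prime p → 1 ≤ k → k < p →
      star (w p) * (u : A) ^ k * w p = 0) :
    ∀ m : ℕ, 0 < m → ∀ t : ℤ, ¬ ((m:ℤ) ∣ t) →
      star (w m) * (↑(u ^ t) : A) * w m = 0 := by
  intro m
  induction m using Nat.strong_induction_on with
  | _ m ih =>
    intro hm t htd
    rcases eq_or_lt_of_le (show 1 ≤ m from hm) with h1 | h1
    · apply absurd _ htd
      rw [← h1]
      exact_mod_cast one_dvd t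
    · have hpp : (m.minFac).Prime := Nat.minFac_prime (by omega)
      obtain ⟨p, m2, hpp, hpm2, hm2pos, hm2lt⟩ :
          ∃ p m2, p.Prime ∧ m = p * m2 ∧ 0 < m2 ∧ m2 < m :=
        ⟨m.minFac, m / m.minFac, hpp, (Nat.mul_div_cancel' (Nat.minFac_dvd m)).symm,
          Nat.div_pos (Nat.minFac_le (by omega)) hpp.pos,
          Nat.div_lt_self (by omega) hpp.one_lt⟩
      have hinner : star (w p) * (↑(u ^ t) : A) * w p = 0 ∨
          ∃ t2 : ℤ, star (w p) * (↑(u ^ t) : A) * w p = ↑(u ^ t2) ∧ t = (p:ℤ) * t2 := by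
        by_cases hpt : (p:ℤ) ∣ t
        · obtain ⟨t2, ht2⟩ := hpt
          refine Or.inr ⟨t2, ?_, ht2⟩
          rw [ht2, myUW u w hB1 p hpp.pos t2, mul_assoc, hiso p hpp.pos, mul_one]
        · refine Or.inl ?_
          have hq : t = (p:ℤ) * (t / p) + t % p := (Int.mul_ediv_add_emod t p).symm
          have hr0 : 0 ≤ t % p := Int.emod_nonneg t (by exact_mod_cast hpp.pos.ne')
          have hrp : t % p < (p:ℤ) := Int.emod_lt_of_pos t (by exact_mod_cast hpp.pos)
          have hrne : t % p ≠ 0 := fun h => hpt (Int.dvd_of_emod_eq_zero h)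
          have hrnat : t % p = ((t % p).toNat : ℤ) := (Int.toNat_of_nonneg hr0).symm
          have hzero : star (w p) * (↑(u ^ (t % p)) : A) * w p = 0 := by
            rw [hrnat, myU_nat]
            exact hB3 p (t % p).toNat hpp (by omega) (by omega)
          calc star (w p) * (↑(u ^ t) : A) * w p
              = star (w p) * ((↑(u ^ ((p:ℤ) * (t/p))) : A) * ↑(u ^ (t % p))) * w p := by
                rw [← myU_add, ← hq]
            _ = (star (w p) * (↑(u ^ ((p:ℤ) * (t/p))) : A)) * ↑(u ^ (t % p)) * w p := by
                simp only [mul_assoc]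
            _ = (↑(u ^ (t/p)) : A) * star (w p) * ↑(u ^ (t % p)) * w p := by
                rw [myUW u w hB1 p hpp.pos]
            _ = (↑(u ^ (t/p)) : A) * (star (w p) * ↑(u ^ (t % p)) * w p) := by
                simp only [mul_assoc]
            _ = 0 := by rw [hzero, mul_zero]
      have hsplit : star (w m) * (↑(u ^ t) : A) * w m
          = star (w m2) * (star (w p) * (↑(u ^ t) : A) * w p) * w m2 := by
        rw [hpm2, hB0 p m2 hpp.pos hm2pos, star_mul]
        simp only [mul_assoc]
      rcases hinner with h0 | ⟨t2, ht2eq, ht2⟩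
      · rw [hsplit, h0, mul_zero, zero_mul]
      · have hm2t2 : ¬ ((m2:ℤ) ∣ t2) := by
          rintro ⟨c, hc⟩
          exact htd ⟨c, by rw [ht2, hc, hpm2]; push_cast; ring⟩
        rw [hsplit, ht2eq]
        exact ih m2 hm2lt hm2pos t2 hm2t2
end Helpers3

/-- with `d = gcd(m,n)` and `1 = α' m/d - β' n/d`,
`w_m w_m* u^{l-k} w_n w_n*` is `0` unless `d ∣ l-k`, and otherwise equals
`u^{mα'(l-k)/d} w_{m∨n} w_{m∨n}* (u*)^{nβ'(l-k)/d}`. -/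
theorem stmt11 {A : Type*} [NormedRing A] [StarRing A] [CStarRing A]
    [NormedAlgebra ℂ A] [CompleteSpace A] [StarModule ℂ A]
    (u : unitary A) (w : ℕ → A)
    (hiso : ∀ m : ℕ, 0 < m → star (w m) * w m = 1)
    (hB0 : ∀ m n : ℕ, 0 < m → 0 < n → w (m * n) = w m * w n)
    (hB1 : ∀ m : ℕ, 0 < m → w m * (u : A) = (u : A) ^ m * w m)
    (hB2 : ∀ p q : ℕ, Nat.Prime p → Nat.Prime q → p ≠ q →
      star (w p) * w q = w q * star (w p))
    (hB3 : ∀ p k : ℕ, Nat.Prime p → 1 ≤ k → k < p →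
      star (w p) * (u : A) ^ k * w p = 0)
    (m n d : ℕ) (hm : 0 < m) (hn : 0 < n) (hd : d = Nat.gcd m n)
    (α' β' : ℤ) (hαβ : 1 = α' * ((m / d : ℕ) : ℤ) - β' * ((n / d : ℕ) : ℤ))
    (k l : ℤ) :
    (¬ ((d : ℤ) ∣ (l - k)) →
      w m * star (w m) * (↑(u ^ (l - k)) : A) * (w n * star (w n)) = 0) ∧
    (((d : ℤ) ∣ (l - k)) →
      w m * star (w m) * (↑(u ^ (l - k)) : A) * (w n * star (w n))
        = (↑(u ^ ((m : ℤ) * α' * (l - k) / d)) : A)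
            * (w (Nat.lcm m n) * star (w (Nat.lcm m n)))
            * star (↑(u ^ ((n : ℤ) * β' * (l - k) / d)) : A)) := by
  have hd0 : 0 < d := by
    rw [hd]; exact Nat.gcd_pos_of_pos_left n hm
  have hdvdm : d ∣ m := hd ▸ Nat.gcd_dvd_left m n
  have hdvdn : d ∣ n := hd ▸ Nat.gcd_dvd_right m n
  have hm' : d * (m / d) = m := Nat.mul_div_cancel' hdvdm
  have hn' : d * (n / d) = n := Nat.mul_div_cancel' hdvdn
  have hm'pos : 0 < m / d := Nat.div_pos (Nat.le_of_dvd hm hdvdm) hd0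
  have hn'pos : 0 < n / d := Nat.div_pos (Nat.le_of_dvd hn hdvdn) hd0
  have hco : Nat.Coprime (m / d) (n / d) := by
    rw [hd]; exact Nat.coprime_div_gcd_div_gcd (by rw [← hd]; exact hd0)
  have hwm : w m = w d * w (m / d) := by
    conv_lhs => rw [← hm']
    exact hB0 d (m / d) hd0 hm'pos
  have hwn : w n = w d * w (n / d) := by
    conv_lhs => rw [← hn']
    exact hB0 d (n / d) hd0 hn'pos
  have hLm : Nat.lcm m n = m * (n / d) := by
    rw [Nat.lcm, ← hd]
    exact Nat.mul_div_assoc m hdvdn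
  have hwL : w (Nat.lcm m n) = w d * (w (m / d) * w (n / d)) := by
    rw [hLm, hB0 m (n / d) hm hn'pos, hwm, mul_assoc]
  -- contextual rewriting lemmas
  have cWU : ∀ (c : ℕ), 0 < c → ∀ (t0 : ℤ) (z : A),
      w c * ((↑(u ^ t0) : A) * z) = (↑(u ^ ((c:ℤ) * t0)) : A) * (w c * z) := by
    intro c hc t0 z
    rw [← mul_assoc, myWU u w hB1 c hc t0, mul_assoc]
  have cUW : ∀ (c : ℕ), 0 < c → ∀ (t0 : ℤ) (z : A),
      (↑(u ^ ((c:ℤ) * t0)) : A) * (w c * z) = w c * ((↑(u ^ t0) : A) * z) :=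
    fun c hc t0 z => (cWU c hc t0 z).symm
  have cSU : ∀ (c : ℕ), 0 < c → ∀ (t0 : ℤ) (z : A),
      star (w c) * ((↑(u ^ ((c:ℤ) * t0)) : A) * z) = (↑(u ^ t0) : A) * (star (w c) * z) := by
    intro c hc t0 z
    rw [← mul_assoc, myUW u w hB1 c hc t0, mul_assoc]
  have cUS : ∀ (c : ℕ), 0 < c → ∀ (t0 : ℤ) (z : A),
      (↑(u ^ t0) : A) * (star (w c) * z) = star (w c) * ((↑(u ^ ((c:ℤ) * t0)) : A) * z) :=
    fun c hc t0 z => (cSU c hc t0 z).symm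
  have eUS : ∀ (c : ℕ), 0 < c → ∀ (t0 : ℤ),
      (↑(u ^ t0) : A) * star (w c) = star (w c) * (↑(u ^ ((c:ℤ) * t0)) : A) :=
    fun c hc t0 => (myUW u w hB1 c hc t0).symm
  have cII : ∀ (c : ℕ), 0 < c → ∀ (z : A), star (w c) * (w c * z) = z := by
    intro c hc z
    rw [← mul_assoc, hiso c hc, one_mul]
  have cComm : ∀ (z : A), star (w (m / d)) * (w (n / d) * z) = w (n / d) * (star (w (m / d)) * z) := by
    intro z
    rw [← mul_assoc, myL2 w hiso hB0 hB2 (m / d) (n / d) hm'pos hn'pos hco, mul_assoc]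
  have hWW : w (n / d) * w (m / d) = w (m / d) * w (n / d) := by
    rw [← hB0 (n/d) (m/d) hn'pos hm'pos, ← hB0 (m/d) (n/d) hm'pos hn'pos, Nat.mul_comm]
  have hSSe : star (w (m / d)) * star (w (n / d)) = star (w (n / d)) * star (w (m / d)) := by
    have h := congrArg star hWW
    rwa [star_mul, star_mul] at h
  have cSS : ∀ (z : A), star (w (m / d)) * (star (w (n / d)) * z)
      = star (w (n / d)) * (star (w (m / d)) * z) := by
    intro z
    rw [← mul_assoc, hSSe, mul_assoc]
  constructor
  · -- vanishing case
    intro hnd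
    have key : ∀ z : A, star (w d) * ((↑(u ^ (l - k)) : A) * (w d * z)) = 0 := by
      intro z
      rw [← mul_assoc, ← mul_assoc, myL1 u w hiso hB0 hB1 hB3 d hd0 (l - k) hnd, zero_mul]
    rw [hwm, hwn]
    simp only [star_mul, mul_assoc]
    rw [key, mul_zero, mul_zero, mul_zero]
  · -- main case
    rintro ⟨s, hs⟩
    have hd0' : (d:ℤ) ≠ 0 := by exact_mod_cast hd0.ne'
    have hcastm : (d:ℤ) * ((m / d : ℕ) : ℤ) = (m:ℤ) := by exact_mod_cast hm'
    have hcastn : (d:ℤ) * ((n / d : ℕ) : ℤ) = (n:ℤ) := by exact_mod_cast hn'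
    have he1 : (m:ℤ) * α' * (l - k) / d = (m:ℤ) * α' * s := by
      rw [hs, show (m:ℤ) * α' * ((d:ℤ) * s) = (d:ℤ) * ((m:ℤ) * α' * s) from by ring]
      exact Int.mul_ediv_cancel_left _ hd0'
    have he2 : (n:ℤ) * β' * (l - k) / d = (n:ℤ) * β' * s := by
      rw [hs, show (n:ℤ) * β' * ((d:ℤ) * s) = (d:ℤ) * ((n:ℤ) * β' * s) from by ring]
      exact Int.mul_ediv_cancel_left _ hd0'
    have hexp : s = ((m / d : ℕ) : ℤ) * (α' * s) + ((n / d : ℕ) : ℤ) * (-(β' * s)) := by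
      linear_combination s * hαβ
    have hUsplit : (↑(u ^ s) : A)
        = (↑(u ^ (((m / d : ℕ) : ℤ) * (α' * s))) : A) * ↑(u ^ (((n / d : ℕ) : ℤ) * (-(β' * s)))) := by
      rw [← myU_add, ← hexp]
    have he3 : (d:ℤ) * (((m / d : ℕ) : ℤ) * (α' * s)) = (m:ℤ) * α' * s := by
      linear_combination (α' * s) * hcastm
    have he4 : (d:ℤ) * (((n / d : ℕ) : ℤ) * (-(β' * s))) = -((n:ℤ) * β' * s) := by
      linear_combination (-(β' * s)) * hcastn
    rw [he1, he2, myU_star, hs, hwm, hwn, hwL]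
    simp only [star_mul, mul_assoc]
    rw [cSU d hd0 s, cII d hd0, hUsplit]
    simp only [mul_assoc]
    rw [cSU (m / d) hm'pos (α' * s), cUW (n / d) hn'pos (-(β' * s)), cComm,
      cUS (n / d) hn'pos (-(β' * s)), eUS d hd0, cSS, he4,
      cWU (m / d) hm'pos (α' * s), cWU d hd0, he3,
      show (m:ℤ) * (α' * s) = (m:ℤ) * α' * s from by ring,
      show (n:ℤ) * (β' * s) = (n:ℤ) * β' * s from by ring]
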